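/- Let 𝒰 be a complex Hilbert space and let Ω be a strictly positive operator on ℓ²₊(𝒰) satisfying Ω ≤ S_𝒰* Ω S_𝒰. Then the closed linear span of the set { S_𝒰ⁿ Ω⁻¹ E_𝒰 u : n ≥ 0, u ∈ 𝒰 } equals ℓ²₊(𝒰). -/

import Mathlib

/- Statement 19 (Outerness / density, Lemma on Ω with Ω ≤ S*ΩS): Let Ω be a strictly
positive operator on ℓ²₊(𝒰) with Ω ≤ S_𝒰*ΩS_𝒰.  Then the closed linear span of
{ S_𝒰ⁿ Ω⁻¹ E_𝒰 u : n ≥ 0, u ∈ 𝒰 } is all of ℓ²₊(𝒰). -/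

open ContinuousLinearMap

noncomputable section

local notation "ℓ²(" X ")" => lp (fun _ : ℕ => X) 2

/-- A bounded operator on a Hilbert space is strictly positive if it is positive
(self-adjoint with non-negative quadratic form) and invertible. -/
def IsStrictlyPositiveOp {H : Type*} [NormedAddCommGroup H] [InnerProductSpace ℂ H]
    [CompleteSpace H] (T : H →L[ℂ] H) : Prop :=
  T.IsPositive ∧ IsUnit T

variable {𝒰 : Type*} [NormedAddCommGroup 𝒰] [InnerProductSpace ℂ 𝒰] [CompleteSpace 𝒰]

set_option maxHeartbeats 2000000 in
theorem outer_density_of_shifted_inverse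
    -- the unilateral forward shift and the embedding onto the zeroth coordinate
    (S𝒰 : ℓ²(𝒰) →L[ℂ] ℓ²(𝒰))
    (hS𝒰0 : ∀ x : ℓ²(𝒰), S𝒰 x 0 = 0)
    (hS𝒰1 : ∀ (x : ℓ²(𝒰)) (n : ℕ), S𝒰 x (n + 1) = x n)
    (E𝒰 : 𝒰 →L[ℂ] ℓ²(𝒰))
    (hE𝒰0 : ∀ u : 𝒰, E𝒰 u 0 = u) (hE𝒰1 : ∀ (u : 𝒰) (n : ℕ), E𝒰 u (n + 1) = 0)
    -- Ω strictly positive with Ω ≤ S*ΩS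
    (Ω : ℓ²(𝒰) →L[ℂ] ℓ²(𝒰))
    (hΩ : IsStrictlyPositiveOp Ω)
    (hle : ((adjoint S𝒰).comp (Ω.comp S𝒰) - Ω).IsPositive) :
    (Submodule.span ℂ
        {x : ℓ²(𝒰) | ∃ (n : ℕ) (u : 𝒰),
          x = (S𝒰 ^ n) ((Ring.inverse Ω) (E𝒰 u))}).topologicalClosure = ⊤ := by
  classical
  obtain ⟨hpos, hunit⟩ := hΩ
  rw [Submodule.topologicalClosure_eq_top_iff, Submodule.eq_bot_iff]
  intro y hy
  set S' : ℓ²(𝒰) →L[ℂ] ℓ²(𝒰) := adjoint S𝒰 with hS'def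
  set Ωi : ℓ²(𝒰) →L[ℂ] ℓ²(𝒰) := Ring.inverse Ω with hΩidef
  have h1 : Ω * Ωi = 1 := Ring.mul_inverse_cancel Ω hunit
  have hΩΩi : ∀ x, Ω (Ωi x) = x := by
    intro x
    have : (Ω * Ωi) x = (1 : ℓ²(𝒰) →L[ℂ] ℓ²(𝒰)) x := by rw [h1]
    simpa [ContinuousLinearMap.mul_apply] using this
  have hΩadj : adjoint Ω = Ω := hpos.isSelfAdjoint.adjoint_eq
  have hΩsymm : ∀ a b : ℓ²(𝒰), (inner ℂ (Ω a) b : ℂ) = inner ℂ a (Ω b) := by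
    intro a b
    conv_lhs => rw [← hΩadj]
    exact ContinuousLinearMap.adjoint_inner_left Ω b a
  have hstarΩ : star Ω = Ω := by
    rw [ContinuousLinearMap.star_eq_adjoint, hΩadj]
  have hstarΩi : star Ωi = Ωi := by
    have h3 : star Ωi * Ω = 1 := by
      have h4 := congrArg star h1
      rwa [star_mul, star_one, hstarΩ] at h4
    calc star Ωi = star Ωi * (Ω * Ωi) := by rw [h1, mul_one]
      _ = (star Ωi * Ω) * Ωi := (mul_assoc _ _ _).symm
      _ = Ωi := by rw [h3, one_mul]
  have hΩiadj : adjoint Ωi = Ωi := by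
    rw [← ContinuousLinearMap.star_eq_adjoint, hstarΩi]
  have hΩisymm : ∀ a b : ℓ²(𝒰), (inner ℂ (Ωi a) b : ℂ) = inner ℂ a (Ωi b) := by
    intro a b
    conv_lhs => rw [← hΩiadj]
    exact ContinuousLinearMap.adjoint_inner_left Ωi b a
  -- single-vector identities
  have hsne : ∀ (i j : ℕ) (u : 𝒰), j ≠ i → (lp.single (E := fun _ : ℕ => 𝒰) 2 i u : ℓ²(𝒰)) j = 0 := by
    intro i j u h
    exact @lp.single_apply_ne ℕ (fun _ : ℕ => 𝒰) _ _ 2 i u j h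
  have hsself : ∀ (i : ℕ) (u : 𝒰), (lp.single (E := fun _ : ℕ => 𝒰) 2 i u : ℓ²(𝒰)) i = u := by
    intro i u
    exact @lp.single_apply_self ℕ (fun _ : ℕ => 𝒰) _ _ 2 i u
  have hSsingle : ∀ (k : ℕ) (u : 𝒰), S𝒰 (lp.single (E := fun _ : ℕ => 𝒰) 2 k u) = lp.single (E := fun _ : ℕ => 𝒰) 2 (k + 1) u := by
    intro k u
    apply lp.ext
    funext j
    cases j with
    | zero =>
      rw [hS𝒰0]
      exact (hsne (k + 1) 0 u (by omega)).symm
    | succ j =>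
      rw [hS𝒰1]
      by_cases h : j = k
      · subst h
        rw [hsself, hsself]
      · rw [hsne k j u h, hsne (k + 1) (j + 1) u (by omega)]
  have hEsingle : ∀ u : 𝒰, E𝒰 u = lp.single (E := fun _ : ℕ => 𝒰) 2 0 u := by
    intro u
    apply lp.ext
    funext j
    cases j with
    | zero => rw [hE𝒰0, hsself]
    | succ j => rw [hE𝒰1, hsne 0 (j + 1) u (by omega)]
  -- coordinates of the adjoint shift
  have hS'coord : ∀ (x : ℓ²(𝒰)) (k : ℕ), (S' x) k = x (k + 1) := by
    intro x k
    refine ext_inner_left ℂ fun u => ?_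
    calc (inner ℂ u ((S' x) k) : ℂ)
        = inner ℂ (lp.single (E := fun _ : ℕ => 𝒰) 2 k u) (S' x) := (lp.inner_single_left k u (S' x)).symm
      _ = inner ℂ (S𝒰 (lp.single (E := fun _ : ℕ => 𝒰) 2 k u)) x := ContinuousLinearMap.adjoint_inner_right S𝒰 _ _
      _ = inner ℂ (lp.single (E := fun _ : ℕ => 𝒰) 2 (k + 1) u) x := by rw [hSsingle]
      _ = inner ℂ u (x (k + 1)) := lp.inner_single_left _ u x
  have hS'pow : ∀ (n : ℕ) (x : ℓ²(𝒰)) (k : ℕ), ((S' ^ n) x) k = x (k + n) := by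
    intro n
    induction n with
    | zero => intro x k; simp
    | succ n ih =>
      intro x k
      rw [pow_succ, ContinuousLinearMap.mul_apply, ih (S' x) k, hS'coord, add_assoc]
  have hadjpow : ∀ n : ℕ, adjoint (S𝒰 ^ n) = S' ^ n := by
    intro n
    rw [← ContinuousLinearMap.star_eq_adjoint, star_pow, ContinuousLinearMap.star_eq_adjoint]
  -- orthogonality: the zeroth coordinate of Ωi ((S'^n) y) vanishes
  have horth : ∀ n : ℕ, (Ωi ((S' ^ n) y)) 0 = 0 := by
    intro n
    have key : ∀ u : 𝒰, (inner ℂ u ((Ωi ((S' ^ n) y)) 0) : ℂ) = 0 := by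
      intro u
      have hmem : (S𝒰 ^ n) (Ωi (E𝒰 u)) ∈
          {x : ℓ²(𝒰) | ∃ (n : ℕ) (u : 𝒰), x = (S𝒰 ^ n) ((Ring.inverse Ω) (E𝒰 u))} :=
        ⟨n, u, rfl⟩
      have h0 : (inner ℂ ((S𝒰 ^ n) (Ωi (E𝒰 u))) y : ℂ) = 0 :=
        (Submodule.mem_orthogonal _ y).1 hy _ (Submodule.subset_span hmem)
      calc (inner ℂ u ((Ωi ((S' ^ n) y)) 0) : ℂ)
          = inner ℂ (lp.single (E := fun _ : ℕ => 𝒰) 2 0 u) (Ωi ((S' ^ n) y)) :=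
            (lp.inner_single_left 0 u (Ωi ((S' ^ n) y))).symm
        _ = inner ℂ (E𝒰 u) (Ωi ((S' ^ n) y)) := by rw [hEsingle]
        _ = inner ℂ (Ωi (E𝒰 u)) ((S' ^ n) y) := (hΩisymm _ _).symm
        _ = inner ℂ (Ωi (E𝒰 u)) ((adjoint (S𝒰 ^ n)) y) := by rw [hadjpow]
        _ = inner ℂ ((S𝒰 ^ n) (Ωi (E𝒰 u))) y :=
            ContinuousLinearMap.adjoint_inner_right (S𝒰 ^ n) _ _
        _ = 0 := h0
    have h5 := key ((Ωi ((S' ^ n) y)) 0)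
    rwa [inner_self_eq_zero] at h5
  -- S (S' w) = w whenever w 0 = 0
  have hSS' : ∀ w : ℓ²(𝒰), w 0 = 0 → S𝒰 (S' w) = w := by
    intro w h0
    apply lp.ext
    funext k
    cases k with
    | zero => rw [hS𝒰0, h0]
    | succ k => rw [hS𝒰1, hS'coord]
  -- the sequence a n
  set z : ℕ → ℓ²(𝒰) := fun n => Ωi ((S' ^ n) y) with hzdef
  set a : ℕ → ℝ := fun n => RCLike.re (inner ℂ (z n) ((S' ^ n) y) : ℂ) with hadef
  have hΩz : ∀ m, Ω (z m) = (S' ^ m) y := fun m => hΩΩi _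
  -- monotonicity
  have hmono : ∀ n, a n ≤ a (n + 1) := by
    intro n
    set yn := (S' ^ n) y with hyndef
    have hyn1 : (S' ^ (n + 1)) y = S' yn := by
      rw [pow_succ', ContinuousLinearMap.mul_apply]
    set v := S' (z n) with hvdef
    have hSv : S𝒰 v = z n := hSS' (z n) (horth n)
    -- from hle : re⟪Ω v, v⟫ ≤ re⟪Ω (S v), S v⟫
    have hp2 : RCLike.re (inner ℂ (Ω v) v : ℂ) ≤ RCLike.re (inner ℂ (Ω (S𝒰 v)) (S𝒰 v) : ℂ) := by
      have h6 := hle.re_inner_nonneg_left v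
      rw [ContinuousLinearMap.sub_apply, ContinuousLinearMap.comp_apply,
        ContinuousLinearMap.comp_apply, inner_sub_left, map_sub] at h6
      have h7 : (inner ℂ ((adjoint S𝒰) (Ω (S𝒰 v))) v : ℂ) = inner ℂ (Ω (S𝒰 v)) (S𝒰 v) :=
        ContinuousLinearMap.adjoint_inner_left S𝒰 _ _
      rw [h7] at h6
      linarith
    have hΩvv : RCLike.re (inner ℂ (Ω v) v : ℂ) ≤ a n := by
      have h8 : (inner ℂ (Ω (S𝒰 v)) (S𝒰 v) : ℂ) = inner ℂ yn (z n) := by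
        rw [hSv, hΩz]
      have h9 : RCLike.re (inner ℂ yn (z n) : ℂ) = a n := by
        rw [hadef]
        exact (inner_re_symm _ _)
      calc RCLike.re (inner ℂ (Ω v) v : ℂ)
          ≤ RCLike.re (inner ℂ (Ω (S𝒰 v)) (S𝒰 v) : ℂ) := hp2
        _ = a n := by rw [h8, h9]
    -- positivity of Ω on z (n+1) - v
    have hp1 : 0 ≤ RCLike.re (inner ℂ (Ω (z (n + 1) - v)) (z (n + 1) - v) : ℂ) :=
      hpos.re_inner_nonneg_left (z (n + 1) - v)
    have hcross : RCLike.re (inner ℂ (Ω (z (n + 1))) v : ℂ) = a n := by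
      have h11 : (inner ℂ (Ω (z (n + 1))) v : ℂ) = inner ℂ yn (z n) := by
        rw [hΩz, hyn1]
        calc (inner ℂ (S' yn) v : ℂ)
            = inner ℂ ((adjoint S𝒰) yn) v := rfl
          _ = inner ℂ yn (S𝒰 v) := ContinuousLinearMap.adjoint_inner_left S𝒰 _ _
          _ = inner ℂ yn (z n) := by rw [hSv]
      rw [h11, hadef]
      exact inner_re_symm _ _
    have hcross2 : RCLike.re (inner ℂ (Ω v) (z (n + 1)) : ℂ) = a n := by
      have h12 : (inner ℂ (Ω v) (z (n + 1)) : ℂ) = inner ℂ v (Ω (z (n + 1))) := hΩsymm _ _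
      rw [h12, inner_re_symm]
      exact hcross
    have hself : RCLike.re (inner ℂ (Ω (z (n + 1))) (z (n + 1)) : ℂ) = a (n + 1) := by
      rw [hΩz, hadef, inner_re_symm]
    have hexpand : RCLike.re (inner ℂ (Ω (z (n + 1) - v)) (z (n + 1) - v) : ℂ)
        = a (n + 1) - a n - a n + RCLike.re (inner ℂ (Ω v) v : ℂ) := by
      rw [map_sub, inner_sub_left, inner_sub_right, inner_sub_right]
      rw [map_sub, map_sub, map_sub]
      rw [hself, hcross, hcross2]
      ring
    rw [hexpand] at hp1
    linarith
  have hmono' : ∀ n, a 0 ≤ a n := by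
    intro n
    induction n with
    | zero => exact le_refl (a 0)
    | succ n ih => exact le_trans ih (hmono n)
  -- a n → 0 along a dominating sequence
  have hnormsq : ∀ n, ‖(S' ^ n) y‖ ^ 2 = ∑' k, ‖y (k + n)‖ ^ 2 := by
    intro n
    rw [← inner_self_eq_norm_sq (𝕜 := ℂ) ((S' ^ n) y)]
    rw [lp.inner_eq_tsum, RCLike.re_tsum ℂ (lp.summable_inner _ _)]
    congr 1
    funext k
    rw [hS'pow n y k]
    exact inner_self_eq_norm_sq (𝕜 := ℂ) _
  have htail : Filter.Tendsto (fun n => ‖Ωi‖ * ‖(S' ^ n) y‖ ^ 2) Filter.atTop (nhds 0) := by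
    have h13 : Filter.Tendsto (fun n => ∑' k, ‖y (k + n)‖ ^ 2) Filter.atTop (nhds 0) :=
      tendsto_sum_nat_add (fun k => ‖y k‖ ^ 2)
    have h14 : Filter.Tendsto (fun n => ‖Ωi‖ * ∑' k, ‖y (k + n)‖ ^ 2) Filter.atTop
        (nhds (‖Ωi‖ * 0)) := h13.const_mul _
    rw [mul_zero] at h14
    convert h14 using 2 with n
    rw [hnormsq]
  have hbound : ∀ n, a n ≤ ‖Ωi‖ * ‖(S' ^ n) y‖ ^ 2 := by
    intro n
    calc a n ≤ ‖(inner ℂ (z n) ((S' ^ n) y) : ℂ)‖ := RCLike.re_le_norm _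
      _ ≤ ‖z n‖ * ‖(S' ^ n) y‖ := norm_inner_le_norm _ _
      _ ≤ (‖Ωi‖ * ‖(S' ^ n) y‖) * ‖(S' ^ n) y‖ :=
          mul_le_mul_of_nonneg_right (Ωi.le_opNorm _) (norm_nonneg _)
      _ = ‖Ωi‖ * ‖(S' ^ n) y‖ ^ 2 := by ring
  have ha0le : a 0 ≤ 0 := by
    refine ge_of_tendsto' htail fun n => ?_
    exact le_trans (hmono' n) (hbound n)
  -- a 0 ≥ 0
  have hz0 : z 0 = Ωi y := by rw [hzdef]; simp
  have hy0 : (S' ^ 0) y = y := by simp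
  have ha0eq : a 0 = RCLike.re (inner ℂ (Ω (Ωi y)) (Ωi y) : ℂ) := by
    have e1 : (inner ℂ (Ω (Ωi y)) (Ωi y) : ℂ) = inner ℂ y (Ωi y) := by rw [hΩΩi y]
    show RCLike.re (inner ℂ (z 0) ((S' ^ 0) y) : ℂ) = _
    rw [hz0, hy0, e1, inner_re_symm]
  have ha0ge : 0 ≤ a 0 := by
    rw [ha0eq]
    exact hpos.re_inner_nonneg_left (Ωi y)
  have ha0 : RCLike.re (inner ℂ (Ω (Ωi y)) (Ωi y) : ℂ) = 0 := by
    rw [← ha0eq]; linarith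
  -- Cauchy–Schwarz style argument: re⟪Ω w, w⟫ = 0 implies Ω w = 0
  have hzero : ∀ w : ℓ²(𝒰), RCLike.re (inner ℂ (Ω w) w : ℂ) = 0 → Ω w = 0 := by
    intro w h0
    have hre : ∀ x : ℓ²(𝒰), RCLike.re (inner ℂ (Ω w) x : ℂ) = 0 := by
      intro x
      set α := RCLike.re (inner ℂ (Ω w) x : ℂ) with hα
      set β := RCLike.re (inner ℂ (Ω x) x : ℂ) with hβ
      have hβ0 : 0 ≤ β := hpos.re_inner_nonneg_left x
      have h17 : RCLike.re (inner ℂ (Ω x) w : ℂ) = α := by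
        rw [hΩsymm, inner_re_symm, hα]
      have hq : ∀ t : ℝ, 0 ≤ 2 * t * α + t ^ 2 * β := by
        intro t
        have hexp : (inner ℂ (Ω (w + (t : ℂ) • x)) (w + (t : ℂ) • x) : ℂ)
            = inner ℂ (Ω w) w + (t : ℂ) * inner ℂ (Ω w) x + (t : ℂ) * inner ℂ (Ω x) w
              + (t : ℂ) * ((t : ℂ) * inner ℂ (Ω x) x) := by
          rw [map_add, map_smul, inner_add_left, inner_add_right, inner_add_right,
            inner_smul_left, inner_smul_right, inner_smul_left, inner_smul_right,
            Complex.conj_ofReal]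
          ring
        have hre_exp : RCLike.re ((inner ℂ (Ω (w + (t : ℂ) • x)) (w + (t : ℂ) • x)) : ℂ)
            = RCLike.re (inner ℂ (Ω w) w : ℂ) + t * RCLike.re (inner ℂ (Ω w) x : ℂ)
              + t * RCLike.re (inner ℂ (Ω x) w : ℂ)
              + t * (t * RCLike.re (inner ℂ (Ω x) x : ℂ)) := by
          rw [hexp]
          simp only [RCLike.re_to_complex, Complex.add_re, Complex.mul_re,
            Complex.ofReal_re, Complex.ofReal_im, zero_mul, sub_zero, mul_zero]
        have h15 := hpos.re_inner_nonneg_left (w + (t : ℂ) • x)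
        rw [hre_exp, h0, h17, ← hα, ← hβ] at h15
        nlinarith [h15]
      have ht := hq (-α / (β + 1))
      have hβ1 : 0 < β + 1 := by linarith
      have hkey : α ^ 2 * (β + 2) ≤ 0 := by
        have h19 : (β + 1) ^ 2 * (2 * (-α / (β + 1)) * α + (-α / (β + 1)) ^ 2 * β)
            = -(α ^ 2 * (β + 2)) := by
          field_simp
          ring
        have h20 : 0 ≤ (β + 1) ^ 2 * (2 * (-α / (β + 1)) * α + (-α / (β + 1)) ^ 2 * β) :=
          mul_nonneg (sq_nonneg _) ht
        rw [h19] at h20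
        linarith
      nlinarith [sq_nonneg α]
    have hinner : ∀ x : ℓ²(𝒰), (inner ℂ (Ω w) x : ℂ) = 0 := by
      intro x
      have hre1 := hre x
      have hre2 := hre ((Complex.I : ℂ) • x)
      rw [inner_smul_right] at hre2
      have him : (inner ℂ (Ω w) x : ℂ).im = 0 := by
        simp only [RCLike.re_to_complex, Complex.mul_re, Complex.I_re, Complex.I_im,
          zero_mul, one_mul, zero_sub, neg_eq_zero] at hre2
        exact hre2
      have hr : (inner ℂ (Ω w) x : ℂ).re = 0 := by
        simpa only [RCLike.re_to_complex] using hre1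
      exact Complex.ext hr him
    refine ext_inner_left ℂ fun v => ?_
    rw [inner_zero_right, ← inner_conj_symm, hinner v, map_zero]
  have hΩw : Ω (Ωi y) = 0 := hzero (Ωi y) ha0
  have : y = 0 := by rw [← hΩΩi y, hΩw]
  exact this

end
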